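/- Let M be a finitely presented right R-module. Then the canonical map M ⊗_R R⟪x₁,…,xₙ⟫ → M⟪x₁,…,xₙ⟫, sending an elementary tensor m ⊗ Σ_{a∈ℤⁿ} r_a x^a to the family (m·r_a)_{a∈ℤⁿ}, is an isomorphism of R⟪x₁,…,xₙ⟫-modules (in particular, it is bijective). -/

import Mathlib

open scoped TensorProduct

set_option synthInstance.maxHeartbeats 1000000
set_option maxHeartbeats 1600000

variable (R : Type) [CommRing R] (n : ℕ)

/-- The Novikov ring `R⟪x₁,…,xₙ⟫`: formal series `Σ_{a∈ℤⁿ} r_a x^a` whose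
support satisfies `m·(1,…,1) + supp(f) ⊆ ℕⁿ` for some `m ∈ ℕ`, with
convolution product (realised as a subalgebra of the Hahn series ring over the
partially ordered group `ℤⁿ`). -/
noncomputable def NovikovRing : Subalgebra R (HahnSeries (Fin n → ℤ) R) where
  carrier := {f | ∃ m : ℕ, ∀ a ∈ f.support, ∀ i, -(m : ℤ) ≤ a i}
  mul_mem' := by
    rintro f g ⟨m1, h1⟩ ⟨m2, h2⟩
    refine ⟨m1 + m2, fun a ha i => ?_⟩
    obtain ⟨x, hx, y, hy, rfl⟩ := HahnSeries.support_mul_subset ha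
    have := h1 x hx i
    have := h2 y hy i
    have : (x + y) i = x i + y i := rfl
    push_cast
    omega
  one_mem' := by
    refine ⟨0, fun a ha i => ?_⟩
    have h0 : a = 0 := by
      by_contra hne
      exact ha (by simp [HahnSeries.coeff_one, hne, HahnSeries.mem_support])
    simp [h0]
  add_mem' := by
    rintro f g ⟨m1, h1⟩ ⟨m2, h2⟩
    refine ⟨max m1 m2, fun a ha i => ?_⟩
    rcases HahnSeries.support_add_subset _ _ ha with h | h
    · have := h1 a h i; push_cast; omega
    · have := h2 a h i; push_cast; omega
  zero_mem' := ⟨0, by simp⟩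
  algebraMap_mem' := by
    intro r
    refine ⟨0, fun a ha i => ?_⟩
    have h0 : a = 0 := by
      have := HahnSeries.support_single_subset (a := (0 : Fin n → ℤ)) (r := r) ha
      simpa using this
    simp [h0]

variable (M : Type) [AddCommGroup M] [Module R M]

/-- The truncated power `M⟪x₁,…,xₙ⟫`: families `(m_a)_{a∈ℤⁿ} ∈ ∏_{ℤⁿ} M` whose
support satisfies `m·(1,…,1) + supp ⊆ ℕⁿ` for some `m ∈ ℕ`, as a module over
the Novikov ring `R⟪x₁,…,xₙ⟫` (with convolution action). -/
noncomputable def TruncPower :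
    Submodule (NovikovRing R n) (HahnModule (Fin n → ℤ) R M) where
  carrier := {g | ∃ m : ℕ, ∀ a ∈ ((HahnModule.of R).symm g).support, ∀ i, -(m : ℤ) ≤ a i}
  add_mem' := by
    rintro f g ⟨m1, h1⟩ ⟨m2, h2⟩
    refine ⟨max m1 m2, fun a ha i => ?_⟩
    rw [HahnModule.of_symm_add] at ha
    rcases HahnSeries.support_add_subset _ _ ha with h | h
    · have := h1 a h i; push_cast; omega
    · have := h2 a h i; push_cast; omega
  zero_mem' := ⟨0, by simp⟩
  smul_mem' := by
    rintro c g ⟨m2, h2⟩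
    obtain ⟨m1, h1⟩ := c.2
    refine ⟨m1 + m2, fun a ha i => ?_⟩
    have hsub := HahnModule.support_smul_subset_vadd_support
      (x := (c : HahnSeries (Fin n → ℤ) R)) (y := g)
    obtain ⟨x, hx, y, hy, rfl⟩ := hsub ha
    have := h1 x hx i
    have := h2 y hy i
    have hxy : (x +ᵥ y) i = x i + y i := rfl
    push_cast
    omega

/-- The Hahn series with coefficients `f_a • m` for a fixed `m`. -/
noncomputable def smulSeries (m : M) (f : HahnSeries (Fin n → ℤ) R) :
    HahnSeries (Fin n → ℤ) M where
  coeff := fun a => f.coeff a • m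
  isPWO_support' := f.isPWO_support'.mono (by
    intro a ha
    simp only [Function.mem_support] at ha ⊢
    intro h0
    exact ha (by rw [h0, zero_smul]))

/-- The canonical map `M ⊗_R R⟪x₁,…,xₙ⟫ → M⟪x₁,…,xₙ⟫ ⊆ ∏_{ℤⁿ} M`, sending an
elementary tensor `m ⊗ Σ_{a∈ℤⁿ} r_a x^a` to the family `(r_a • m)_{a∈ℤⁿ}`. -/
noncomputable def canonMap :
    M ⊗[R] (NovikovRing R n) →ₗ[R] HahnModule (Fin n → ℤ) R M :=
  TensorProduct.lift
    { toFun := fun m =>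
        { toFun := fun f => (HahnModule.of R) (smulSeries R n M m f.1)
          map_add' := by
            intro f g
            apply HahnModule.ext
            funext a
            show (f.1 + g.1).coeff a • m = _
            rw [HahnSeries.coeff_add, add_smul]
            rfl
          map_smul' := by
            intro r f
            apply HahnModule.ext
            funext a
            show (r • f.1).coeff a • m = _
            rw [HahnSeries.coeff_smul, smul_assoc]
            rfl }
      map_add' := by
        intro m m'
        apply LinearMap.ext
        intro f
        apply HahnModule.ext
        funext a
        show f.1.coeff a • (m + m') = _
        rw [smul_add]
        rfl
      map_smul' := by
        intro r m
        apply LinearMap.ext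
        intro f
        apply HahnModule.ext
        funext a
        show f.1.coeff a • (r • m) = _
        rw [smul_comm]
        rfl }


section Aux

/-- Bridge instance: the tensor product with the Novikov ring is an additive group. -/
noncomputable instance (priority := 10) novTensorAddCommGroup {R' : Type} [CommRing R'] {n' : ℕ}
    (N : Type) [AddCommGroup N] [Module R' N] :
    AddCommGroup (N ⊗[R'] NovikovRing R' n') :=
  @TensorProduct.addCommGroup R' _ N (NovikovRing R' n') _ _ _ _

/-- Bridge instance: Hahn modules over an additive group are additive groups. -/
noncomputable instance (priority := 10) hahnModuleAddCommGroup {R' : Type} [CommRing R']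
    {n' : ℕ} (N : Type) [AddCommGroup N] [Module R' N] :
    AddCommGroup (HahnModule (Fin n' → ℤ) R' N) :=
  inferInstanceAs (AddCommGroup (HahnSeries (Fin n' → ℤ) N))

variable {N P : Type} [AddCommGroup N] [Module R N] [AddCommGroup P] [Module R P]

/-- Coefficient extraction as an additive monoid hom. -/
noncomputable def coeffAdd (a : Fin n → ℤ) : HahnModule (Fin n → ℤ) R N →+ N where
  toFun g := ((HahnModule.of R).symm g).coeff a
  map_zero' := rfl
  map_add' f g := by
    show ((HahnModule.of R).symm (f + g)).coeff a
      = ((HahnModule.of R).symm f).coeff a + ((HahnModule.of R).symm g).coeff a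
    rw [HahnModule.of_symm_add]; rfl

lemma canonMap_tmul_coeff (m : N) (f : NovikovRing R n) (a : Fin n → ℤ) :
    ((HahnModule.of R).symm (canonMap R n N (m ⊗ₜ[R] f))).coeff a
      = (f : HahnSeries (Fin n → ℤ) R).coeff a • m := rfl

lemma coeff_canonMap_sum {ι : Type} (s : Finset ι) (t : ι → N ⊗[R] NovikovRing R n)
    (a : Fin n → ℤ) :
    ((HahnModule.of R).symm (canonMap R n N (∑ i ∈ s, t i))).coeff a
      = ∑ i ∈ s, ((HahnModule.of R).symm (canonMap R n N (t i))).coeff a := by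
  rw [map_sum]
  exact map_sum (coeffAdd R n a) _ s

/-- Coefficientwise application of a linear map, on Hahn modules. -/
noncomputable def hahnMap (φ : N →ₗ[R] P) :
    HahnModule (Fin n → ℤ) R N →ₗ[R] HahnModule (Fin n → ℤ) R P where
  toFun g := (HahnModule.of R) (((HahnModule.of R).symm g).map φ)
  map_add' f g := by
    apply HahnModule.ext
    funext a
    show φ (((HahnModule.of R).symm (f + g)).coeff a) = _
    rw [HahnModule.of_symm_add, HahnSeries.coeff_add, map_add]
    rfl
  map_smul' r g := by
    apply HahnModule.ext
    funext a
    show φ ((r • (HahnModule.of R).symm g).coeff a) = _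
    rw [HahnSeries.coeff_smul, map_smul]
    rfl

lemma hahnMap_coeff (φ : N →ₗ[R] P) (g : HahnModule (Fin n → ℤ) R N) (a : Fin n → ℤ) :
    ((HahnModule.of R).symm (hahnMap R n φ g)).coeff a
      = φ (((HahnModule.of R).symm g).coeff a) := rfl

lemma canonMap_natural (φ : N →ₗ[R] P) (z : N ⊗[R] NovikovRing R n) :
    hahnMap R n φ (canonMap R n N z)
      = canonMap R n P (LinearMap.rTensor (NovikovRing R n) φ z) := by
  induction z using TensorProduct.induction_on with
  | zero => simp
  | tmul m f =>
      apply HahnModule.ext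
      funext a
      rw [hahnMap_coeff, canonMap_tmul_coeff, LinearMap.rTensor_tmul, canonMap_tmul_coeff,
        map_smul]
  | add x y hx hy => simp [map_add, hx, hy]

lemma canonMap_mem_truncPower (z : N ⊗[R] NovikovRing R n) :
    canonMap R n N z ∈ TruncPower R n N := by
  induction z using TensorProduct.induction_on with
  | zero => rw [map_zero]; exact (TruncPower R n N).zero_mem
  | tmul m f =>
      obtain ⟨k, hk⟩ := f.2
      refine ⟨k, fun a ha i => ?_⟩
      refine hk a ?_ i
      rw [HahnSeries.mem_support] at ha ⊢
      intro h0
      apply ha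
      rw [canonMap_tmul_coeff, h0, zero_smul]
  | add x y hx hy => rw [map_add]; exact (TruncPower R n N).add_mem hx hy

lemma canonMap_surj_aux {ι : Type} [Fintype ι]
    (v : ι → N) (hv : ∀ x : N, ∃ c : ι → R, ∑ i, c i • v i = x)
    (g : HahnModule (Fin n → ℤ) R N) (hg : g ∈ TruncPower R n N) :
    ∃ z : N ⊗[R] NovikovRing R n, canonMap R n N z = g := by
  classical
  set G := (HahnModule.of R).symm g with hGdef
  choose c hc using fun a : Fin n → ℤ => hv (G.coeff a)
  set cc : (Fin n → ℤ) → ι → R := fun a => if G.coeff a = 0 then 0 else c a with hcc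
  have hsupp : ∀ i : ι, (Function.support fun a => cc a i) ⊆ G.support := by
    intro i a ha
    simp only [Function.mem_support] at ha
    rw [HahnSeries.mem_support]
    intro h0
    apply ha
    simp only [hcc, if_pos h0, Pi.zero_apply]
  have hFwf : ∀ i : ι, (Function.support fun a => cc a i).IsPWO :=
    fun i => G.isPWO_support.mono (hsupp i)
  set F : ι → HahnSeries (Fin n → ℤ) R := fun i => ⟨fun a => cc a i, hFwf i⟩ with hF
  have hFmem : ∀ i, F i ∈ NovikovRing R n := by
    obtain ⟨k, hk⟩ := hg
    exact fun i => ⟨k, fun a ha j => hk a (hsupp i ha) j⟩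
  refine ⟨∑ i, v i ⊗ₜ[R] (⟨F i, hFmem i⟩ : NovikovRing R n), ?_⟩
  apply HahnModule.ext
  funext a
  rw [coeff_canonMap_sum]
  have : ∀ i : ι, ((HahnModule.of R).symm
      (canonMap R n N (v i ⊗ₜ[R] (⟨F i, hFmem i⟩ : NovikovRing R n)))).coeff a
      = cc a i • v i := fun i => canonMap_tmul_coeff R n (v i) _ a
  rw [Finset.sum_congr rfl fun i _ => this i]
  show _ = G.coeff a
  by_cases h0 : G.coeff a = 0
  · rw [h0]
    refine Finset.sum_eq_zero fun i _ => ?_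
    simp only [hcc, if_pos h0, Pi.zero_apply, zero_smul]
  · have : cc a = c a := by simp only [hcc, if_neg h0]
    rw [this]
    exact hc a

lemma canonMap_eval (ι : Type) [DecidableEq ι] (z : (ι →₀ R) ⊗[R] NovikovRing R n) (a : Fin n → ℤ) (i : ι) :
    ((HahnModule.of R).symm (canonMap R n (ι →₀ R) z)).coeff a i
      = ((TensorProduct.finsuppScalarLeft R (NovikovRing R n) ι z i :
          HahnSeries (Fin n → ℤ) R)).coeff a := by
  induction z using TensorProduct.induction_on with
  | zero =>
      rw [(canonMap R n (ι →₀ R)).map_zero,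
        (TensorProduct.finsuppScalarLeft R (NovikovRing R n) ι).map_zero]
      simp
  | tmul p f =>
      rw [canonMap_tmul_coeff, Finsupp.smul_apply,
        TensorProduct.finsuppScalarLeft_apply_tmul_apply]
      show _ = ((p i • f : NovikovRing R n) : HahnSeries (Fin n → ℤ) R).coeff a
      rw [SetLike.val_smul, HahnSeries.coeff_smul, smul_eq_mul, smul_eq_mul, mul_comm]
  | add x y hx hy =>
      rw [map_add (canonMap R n (ι →₀ R)), HahnModule.of_symm_add, HahnSeries.coeff_add,
        Finsupp.add_apply, hx, hy,
        (TensorProduct.finsuppScalarLeft R (NovikovRing R n) ι).map_add x y,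
        Finsupp.add_apply, AddMemClass.coe_add, HahnSeries.coeff_add]

lemma canonMap_inj_free (ι : Type) [DecidableEq ι] :
    Function.Injective (canonMap R n (ι →₀ R)) := by
  intro x y hxy
  have e : TensorProduct.finsuppScalarLeft R (NovikovRing R n) ι x
      = TensorProduct.finsuppScalarLeft R (NovikovRing R n) ι y := by
    ext i a
    rw [← canonMap_eval, ← canonMap_eval, hxy]
  exact (TensorProduct.finsuppScalarLeft R (NovikovRing R n) ι).injective e

lemma truncPower_lift (K' : Submodule R N) (g : HahnModule (Fin n → ℤ) R N)
    (hgK : ∀ a : Fin n → ℤ, ((HahnModule.of R).symm g).coeff a ∈ K')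
    (hg : g ∈ TruncPower R n N) :
    ∃ gK : HahnModule (Fin n → ℤ) R K', gK ∈ TruncPower R n K'
      ∧ hahnMap R n K'.subtype gK = g := by
  refine ⟨(HahnModule.of R) (⟨fun a => (⟨((HahnModule.of R).symm g).coeff a, hgK a⟩ : K'), ?_⟩ :
      HahnSeries (Fin n → ℤ) K'), ?_, ?_⟩
  · refine ((HahnModule.of R).symm g).isPWO_support.mono ?_
    intro a ha
    simp only [Function.mem_support] at ha ⊢
    exact fun h0 => ha (Subtype.ext h0)
  · obtain ⟨k, hk⟩ := hg
    refine ⟨k, fun a ha i => hk a ?_ i⟩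
    rw [HahnSeries.mem_support] at ha ⊢
    intro h0
    exact ha (Subtype.ext h0)
  · apply HahnModule.ext
    funext a
    rfl

end Aux

/-- Let `M` be a finitely presented `R`-module. Then the
canonical map `M ⊗_R R⟪x₁,…,xₙ⟫ → M⟪x₁,…,xₙ⟫`, sending `m ⊗ Σ r_a x^a` to the
family `(r_a • m)_{a∈ℤⁿ}`, is an isomorphism of `R⟪x₁,…,xₙ⟫`-modules: it is
injective, its image is exactly the truncated power `M⟪x₁,…,xₙ⟫`, and it
intertwines the `R⟪x₁,…,xₙ⟫`-scalar actions. -/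
theorem canonMap_bijective (hM : Module.FinitePresentation R M) :
    Function.Injective (canonMap R n M) ∧
      Set.range (canonMap R n M) = (TruncPower R n M : Set (HahnModule (Fin n → ℤ) R M)) ∧
      ∀ (f g : NovikovRing R n) (m : M),
        canonMap R n M (m ⊗ₜ[R] (g * f)) =
          (f : HahnSeries (Fin n → ℤ) R) • canonMap R n M (m ⊗ₜ[R] g) := by
  classical
  obtain ⟨s, hs, t, ht⟩ := hM.out
  set π : (↥s →₀ R) →ₗ[R] M := Finsupp.linearCombination R ((↑) : ↥s → M) with hπdef
  have hπ : Function.Surjective π := by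
    rw [← LinearMap.range_eq_top, hπdef, Finsupp.range_linearCombination,
      Subtype.range_coe_subtype]
    simpa using hs
  set K := LinearMap.ker π with hKdef
  refine ⟨?_, ?_, ?_⟩
  · suffices hzero : ∀ z : M ⊗[R] NovikovRing R n, canonMap R n M z = 0 → z = 0 by
      intro z1 z2 h12
      have h := hzero (z1 - z2) (by rw [map_sub, h12, sub_self])
      exact sub_eq_zero.mp h
    intro z hz
    obtain ⟨w, hw⟩ := LinearMap.rTensor_surjective (NovikovRing R n) hπ z
    have hG0 : hahnMap R n π (canonMap R n (↥s →₀ R) w) = 0 := by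
      rw [canonMap_natural, hw, hz]
    have hker : ∀ a : Fin n → ℤ,
        ((HahnModule.of R).symm (canonMap R n (↥s →₀ R) w)).coeff a ∈ K := by
      intro a
      have h := congrArg (fun gg => ((HahnModule.of R).symm gg).coeff a) hG0
      rw [LinearMap.mem_ker]
      simpa [hahnMap_coeff] using h
    obtain ⟨gK, hgKmem, hgKlift⟩ := truncPower_lift R n K (canonMap R n (↥s →₀ R) w)
      hker (canonMap_mem_truncPower R n w)
    have htK : ∀ i : ↥t, (i : ↥s →₀ R) ∈ K := fun i => by
      rw [← ht]; exact Submodule.subset_span i.2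
    set vK : ↥t → K := fun i => ⟨(i : ↥s →₀ R), htK i⟩ with hvKdef
    have hvK : ∀ k : K, ∃ c : ↥t → R, ∑ i, c i • vK i = k := by
      intro k
      have hk : (k : ↥s →₀ R) ∈ Submodule.span R (↑t : Set (↥s →₀ R)) := by
        rw [ht]; exact k.2
      obtain ⟨c, -, hc⟩ := Submodule.mem_span_finset.mp hk
      refine ⟨fun i => c i, ?_⟩
      apply Subtype.ext
      rw [AddSubmonoidClass.coe_finset_sum]
      simp only [SetLike.val_smul, hvKdef]
      rw [show (∑ i : ↥t, c ↑i • ((i : ↥s →₀ R))) = ∑ x ∈ t, c x • x from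
        Finset.sum_coe_sort t (fun x => c x • x)]
      exact hc
    obtain ⟨u, hu⟩ := canonMap_surj_aux R n vK hvK gK hgKmem
    have hnat := canonMap_natural (N := ↥K) (P := (↥s →₀ R)) R n K.subtype u
    rw [hu, hgKlift] at hnat
    have hwu := canonMap_inj_free R n ↥s hnat.symm
    have hcomp : π ∘ₗ K.subtype = 0 := by
      apply LinearMap.ext
      intro k
      exact k.2
    rw [← hw, ← hwu, ← LinearMap.comp_apply, ← LinearMap.rTensor_comp, hcomp,
      LinearMap.rTensor_zero, LinearMap.zero_apply]
  · apply Set.Subset.antisymm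
    · rintro x ⟨z, rfl⟩
      exact canonMap_mem_truncPower R n z
    · intro g hg
      have hvM : ∀ x : M, ∃ c : ↥s → R, ∑ i, c i • (i : M) = x := by
        intro x
        have hx : x ∈ Submodule.span R (↑s : Set M) := by rw [hs]; trivial
        obtain ⟨c, -, hc⟩ := Submodule.mem_span_finset.mp hx
        refine ⟨fun i => c i, ?_⟩
        rw [show (∑ i : ↥s, c ↑i • (i : M)) = ∑ x ∈ s, c x • x from
          Finset.sum_coe_sort s (fun x => c x • x)]
        exact hc
      exact canonMap_surj_aux R n (fun i : ↥s => (i : M)) hvM g hg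
  · intro f g m
    apply HahnModule.ext
    funext a
    have hsub : ((HahnModule.of R).symm (canonMap R n M (m ⊗ₜ[R] g))).support
        ⊆ (g : HahnSeries (Fin n → ℤ) R).support := by
      intro b hb
      rw [HahnSeries.mem_support] at hb ⊢
      intro h0
      apply hb
      rw [canonMap_tmul_coeff, h0, zero_smul]
    rw [canonMap_tmul_coeff]
    rw [HahnModule.coeff_smul_right (g : HahnSeries (Fin n → ℤ) R).isPWO_support hsub]
    have hcoe : ((g * f : NovikovRing R n) : HahnSeries (Fin n → ℤ) R)
        = (f : HahnSeries (Fin n → ℤ) R) * (g : HahnSeries (Fin n → ℤ) R) := by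
      rw [MulMemClass.coe_mul, mul_comm]
    rw [hcoe, HahnSeries.coeff_mul_right' (g : HahnSeries (Fin n → ℤ) R).isPWO_support
      (Set.Subset.refl _), Finset.sum_smul]
    refine Finset.sum_congr rfl fun ij hij => ?_
    rw [canonMap_tmul_coeff, mul_smul]
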